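/- The surface parametrized by Ψ(u,v) = (−u sin(log u) cos v, u cos(log u) cos v, u sin v) for u > 0, v ∈ R, satisfies |Ψ(u,v)| = u, and it is a (−2)-stationary surface: its mean curvature H and unit normal N satisfy H(p) = −2⟨N(p),p⟩/|p|² at every point, while the surface is not a sphere centered at the origin. -/

import Mathlib

/-- Dot product of vectors in `ℝ³`. -/
def dot3 (x y : Fin 3 → ℝ) : ℝ := x 0 * y 0 + x 1 * y 1 + x 2 * y 2

/-- Cross product of vectors in `ℝ³`. -/
def cross3 (x y : Fin 3 → ℝ) : Fin 3 → ℝ :=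
  ![x 1 * y 2 - x 2 * y 1, x 2 * y 0 - x 0 * y 2, x 0 * y 1 - x 1 * y 0]

/-- The parametrization of the example surface:
`Ψ(u,v) = (−u sin(log u) cos v, u cos(log u) cos v, u sin v)`, `u > 0`. -/
noncomputable def exPsi (u v : ℝ) : Fin 3 → ℝ :=
  ![-u * Real.sin (Real.log u) * Real.cos v,
    u * Real.cos (Real.log u) * Real.cos v,
    u * Real.sin v]

open Real


noncomputable def psiU (u v : ℝ) : Fin 3 → ℝ :=
  ![-((sin (log u) + cos (log u)) * cos v),
    (cos (log u) - sin (log u)) * cos v,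
    sin v]

noncomputable def psiUU (u v : ℝ) : Fin 3 → ℝ :=
  ![(sin (log u) - cos (log u)) * cos v / u,
    -((sin (log u) + cos (log u)) * cos v / u),
    0]

noncomputable def psiV (u v : ℝ) : Fin 3 → ℝ :=
  ![u * sin (log u) * sin v, -(u * cos (log u) * sin v), u * cos v]

noncomputable def psiUV (u v : ℝ) : Fin 3 → ℝ :=
  ![(sin (log u) + cos (log u)) * sin v,
    (sin (log u) - cos (log u)) * sin v,
    cos v]

noncomputable def psiVV (u v : ℝ) : Fin 3 → ℝ :=
  ![u * sin (log u) * cos v, -(u * cos (log u) * cos v), -(u * sin v)]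

lemma hU (u v : ℝ) (hu : 0 < u) : HasDerivAt (fun u' => exPsi u' v) (psiU u v) u := by
  rw [hasDerivAt_pi]
  intro i
  have hlog : HasDerivAt Real.log u⁻¹ u := Real.hasDerivAt_log hu.ne'
  have hs : HasDerivAt (fun u' => Real.sin (Real.log u')) (Real.cos (Real.log u) * u⁻¹) u :=
    (Real.hasDerivAt_sin _).comp u hlog
  have hc : HasDerivAt (fun u' => Real.cos (Real.log u')) (-Real.sin (Real.log u) * u⁻¹) u :=
    (Real.hasDerivAt_cos _).comp u hlog
  fin_cases i
  · show HasDerivAt (fun u' => -u' * sin (log u') * cos v)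
      (-((sin (log u) + cos (log u)) * cos v)) u
    have h1 : (fun u' : ℝ => -u' * sin (log u') * cos v)
        = fun u' => -(u' * sin (log u')) * cos v := by funext y; ring
    rw [h1]
    have h := (((hasDerivAt_id u).mul hs).neg.mul_const (cos v))
    refine h.congr_deriv ?_
    field_simp; simp only [id]; ring
  · show HasDerivAt (fun u' => u' * cos (log u') * cos v)
      ((cos (log u) - sin (log u)) * cos v) u
    have h1 : (fun u' : ℝ => u' * cos (log u') * cos v)
        = fun u' => u' * cos (log u') * cos v := rfl
    have h := (((hasDerivAt_id u).mul hc).mul_const (cos v))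
    refine h.congr_deriv ?_
    field_simp; simp only [id]; ring
  · show HasDerivAt (fun u' => u' * sin v) (sin v) u
    have h := ((hasDerivAt_id u).mul_const (sin v))
    refine h.congr_deriv ?_
    simp

lemma hV (u v : ℝ) : HasDerivAt (fun v' => exPsi u v') (psiV u v) v := by
  rw [hasDerivAt_pi]
  intro i
  fin_cases i
  · show HasDerivAt (fun v' => -u * sin (log u) * cos v') (u * sin (log u) * sin v) v
    have h := (Real.hasDerivAt_cos v).const_mul (-u * sin (log u))
    refine h.congr_deriv ?_
    ring
  · show HasDerivAt (fun v' => u * cos (log u) * cos v') (-(u * cos (log u) * sin v)) v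
    have h := (Real.hasDerivAt_cos v).const_mul (u * cos (log u))
    refine h.congr_deriv ?_
    ring
  · show HasDerivAt (fun v' => u * sin v') (u * cos v) v
    exact (Real.hasDerivAt_sin v).const_mul u

lemma hUU (u v : ℝ) (hu : 0 < u) : HasDerivAt (fun u' => psiU u' v) (psiUU u v) u := by
  rw [hasDerivAt_pi]
  intro i
  have hlog : HasDerivAt Real.log u⁻¹ u := Real.hasDerivAt_log hu.ne'
  have hs : HasDerivAt (fun u' => Real.sin (Real.log u')) (Real.cos (Real.log u) * u⁻¹) u :=
    (Real.hasDerivAt_sin _).comp u hlog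
  have hc : HasDerivAt (fun u' => Real.cos (Real.log u')) (-Real.sin (Real.log u) * u⁻¹) u :=
    (Real.hasDerivAt_cos _).comp u hlog
  fin_cases i
  · show HasDerivAt (fun u' => -((sin (log u') + cos (log u')) * cos v))
      ((sin (log u) - cos (log u)) * cos v / u) u
    have h := ((hs.add hc).mul_const (cos v)).neg
    refine h.congr_deriv ?_
    field_simp; ring
  · show HasDerivAt (fun u' => (cos (log u') - sin (log u')) * cos v)
      (-((sin (log u) + cos (log u)) * cos v / u)) u
    have h := ((hc.sub hs).mul_const (cos v))
    refine h.congr_deriv ?_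
    field_simp; ring
  · show HasDerivAt (fun _ : ℝ => sin v) 0 u
    exact hasDerivAt_const u (sin v)

lemma hUV (u v : ℝ) : HasDerivAt (fun v' => psiU u v') (psiUV u v) v := by
  rw [hasDerivAt_pi]
  intro i
  fin_cases i
  · show HasDerivAt (fun v' => -((sin (log u) + cos (log u)) * cos v'))
      ((sin (log u) + cos (log u)) * sin v) v
    have h := (((Real.hasDerivAt_cos v).const_mul (sin (log u) + cos (log u)))).neg
    refine h.congr_deriv ?_
    ring
  · show HasDerivAt (fun v' => (cos (log u) - sin (log u)) * cos v')
      ((sin (log u) - cos (log u)) * sin v) v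
    have h := ((Real.hasDerivAt_cos v).const_mul (cos (log u) - sin (log u)))
    refine h.congr_deriv ?_
    ring
  · show HasDerivAt (fun v' => sin v') (cos v) v
    exact Real.hasDerivAt_sin v

lemma hVV (u v : ℝ) : HasDerivAt (fun v' => psiV u v') (psiVV u v) v := by
  rw [hasDerivAt_pi]
  intro i
  fin_cases i
  · show HasDerivAt (fun v' => u * sin (log u) * sin v') (u * sin (log u) * cos v) v
    exact (Real.hasDerivAt_sin v).const_mul (u * sin (log u))
  · show HasDerivAt (fun v' => -(u * cos (log u) * sin v')) (-(u * cos (log u) * cos v)) v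
    exact ((Real.hasDerivAt_sin v).const_mul (u * cos (log u))).neg
  · show HasDerivAt (fun v' => u * cos v') (-(u * sin v)) v
    have h := (Real.hasDerivAt_cos v).const_mul u
    refine h.congr_deriv ?_
    ring

lemma exPsi_dot_self (u v : ℝ) : dot3 (exPsi u v) (exPsi u v) = u ^ 2 := by
  have hsC : sin (log u) ^ 2 + cos (log u) ^ 2 = 1 := Real.sin_sq_add_cos_sq _
  have hcS : cos v ^ 2 + sin v ^ 2 = 1 := Real.cos_sq_add_sin_sq v
  simp only [dot3, exPsi, Matrix.cons_val_zero, Matrix.cons_val_one, Matrix.head_cons,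
    Matrix.cons_val_two, Matrix.tail_cons]
  linear_combination (u^2 * cos v ^2) * hsC + u^2 * hcS

lemma exPsi_norm (u v : ℝ) (hu : 0 < u) :
    Real.sqrt (dot3 (exPsi u v) (exPsi u v)) = u := by
  rw [exPsi_dot_self, Real.sqrt_sq hu.le]

/-- The surface `Ψ(u,v) = (−u sin(log u) cos v, u cos(log u) cos v, u sin v)`,
`u > 0`, satisfies `‖Ψ(u,v)‖ = u`; it is a `(−2)`-stationary surface, i.e. its mean
curvature `H = (GL − 2FM + EN̂)/(EG − F²)` (sum of the principal curvatures) and unit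
normal `n` satisfy `H = −2 ⟨n, Ψ⟩/‖Ψ‖²` at every point; and it is not a sphere
centered at the origin. -/
theorem example_minus_two_stationary :
    (∀ u v : ℝ, 0 < u → Real.sqrt (dot3 (exPsi u v) (exPsi u v)) = u) ∧
    (∀ u v : ℝ, 0 < u →
      let Ψu := deriv (fun u' => exPsi u' v) u
      let Ψv := deriv (fun v' => exPsi u v') v
      let Ψuu := deriv (deriv (fun u' => exPsi u' v)) u
      let Ψvv := deriv (deriv (fun v' => exPsi u v')) v
      let Ψuv := deriv (fun v' => deriv (fun u' => exPsi u' v') u) v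
      let E := dot3 Ψu Ψu
      let F := dot3 Ψu Ψv
      let G := dot3 Ψv Ψv
      let w := cross3 Ψu Ψv
      let n := (Real.sqrt (dot3 w w))⁻¹ • w
      let L := dot3 Ψuu n
      let M := dot3 Ψuv n
      let Nhat := dot3 Ψvv n
      (G * L - 2 * F * M + E * Nhat) / (E * G - F ^ 2) =
        -2 * dot3 n (exPsi u v) / dot3 (exPsi u v) (exPsi u v)) ∧
    ¬ ∃ R : ℝ, ∀ u v : ℝ, 0 < u →
        Real.sqrt (dot3 (exPsi u v) (exPsi u v)) = R := by
  refine ⟨fun u v hu => exPsi_norm u v hu, ?_, ?_⟩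
  · intro u v hu
    have h1 : deriv (fun u' => exPsi u' v) u = psiU u v := (hU u v hu).deriv
    have h2 : deriv (fun v' => exPsi u v') v = psiV u v := (hV u v).deriv
    have h3 : deriv (deriv fun u' => exPsi u' v) u = psiUU u v := by
      have hev : (deriv fun u' => exPsi u' v) =ᶠ[nhds u] fun u' => psiU u' v := by
        filter_upwards [Ioi_mem_nhds hu] with x hx
        exact (hU x v hx).deriv
      rw [hev.deriv_eq]
      exact (hUU u v hu).deriv
    have h4 : deriv (deriv fun v' => exPsi u v') v = psiVV u v := by
      have he : (deriv fun v' => exPsi u v') = fun v' => psiV u v' :=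
        funext fun v' => (hV u v').deriv
      rw [he]
      exact (hVV u v).deriv
    have h5 : deriv (fun v' => deriv (fun u' => exPsi u' v') u) v = psiUV u v := by
      have he : (fun v' => deriv (fun u' => exPsi u' v') u) = fun v' => psiU u v' :=
        funext fun v' => (hU u v' hu).deriv
      rw [he]
      exact (hUV u v).deriv
    have h6 : exPsi u v = ![-u * sin (log u) * cos v, u * cos (log u) * cos v, u * sin v] := rfl
    simp only [h1, h2, h3, h4, h5, h6, dot3, cross3, psiU, psiV, psiUU, psiUV, psiVV,
      Pi.smul_apply, smul_eq_mul, Matrix.cons_val_zero, Matrix.cons_val_one, Matrix.head_cons,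
      Matrix.cons_val_two, Matrix.tail_cons]
    set s := sin (log u); set C := cos (log u); set c := cos v; set S := sin v
    set t := (Real.sqrt _)⁻¹ with ht
    have hsC : s^2 + C^2 = 1 := Real.sin_sq_add_cos_sq _
    have hcS : c^2 + S^2 = 1 := Real.cos_sq_add_sin_sq v
    have hui : u * u⁻¹ = 1 := mul_inv_cancel₀ hu.ne'
    rw [div_eq_div_iff ?hD ?hP]
    · linear_combination (c * S^6 * u^4 * t + (-1) * c * S^6 * u^5 * t * u⁻¹ + (4) * c^3 * S^4 * u^4 * t + (-4) * c^3 * S^4 * u^5 * t * u⁻¹ + (5) * c^5 * S^2 * u^4 * t + (-5) * c^5 * S^2 * u^5 * t * u⁻¹ + (2) * c^7 * u^4 * t + (-2) * c^7 * u^5 * t * u⁻¹ + (4) * C^2 * c * S^6 * u^4 * t + (-1) * C^2 * c * S^6 * u^5 * t * u⁻¹ + (7) * C^2 * c^3 * S^4 * u^4 * t + (-3) * C^2 * c^3 * S^4 * u^5 * t * u⁻¹ + (5) * C^2 * c^5 * S^2 * u^4 * t + (-3) * C^2 * c^5 * S^2 * u^5 * t * u⁻¹ + (2) * C^2 * c^7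 * u^4 * t + (-2) * C^2 * c^7 * u^5 * t * u⁻¹ + (4) * C^4 * c^3 * S^4 * u^4 * t + (-1) * C^4 * c^3 * S^4 * u^5 * t * u⁻¹ + (2) * C^4 * c^5 * S^2 * u^4 * t + (-2) * C^4 * c^5 * S^2 * u^5 * t * u⁻¹ + (-2) * C^4 * c^7 * u^4 * t + (4) * s^2 * c * S^6 * u^4 * t + (-1) * s^2 * c * S^6 * u^5 * t * u⁻¹ + (7) * s^2 * c^3 * S^4 * u^4 * t + (-3) * s^2 * c^3 * S^4 * u^5 * t * u⁻¹ + (5) * s^2 * c^5 * S^2 * u^4 * t + (-3) * s^2 * c^5 * S^2 * u^5 * t * u⁻¹ + (2) * s^2 * c^7 * u^4 * t + (-2) * s^2 * c^7 * u^5 * t * u⁻¹ + (8) * s^2 * C^2 * c^3 * S^4 * u^4 * t + (-2) * s^2 * C^2 * c^3 * S^4 * u^5 * t * u⁻¹ + (4) * s^2 * C^2 * c^5 * S^2 * u^4 * t + (-4) * s^2 * C^2 * c^5 * S^2 * u^5 * t * u⁻¹ + (-4) * s^2 * C^2 * c^7 * u^4 * t + (4) * s^4 * c^3 * S^4 * u^4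 * t + (-1) * s^4 * c^3 * S^4 * u^5 * t * u⁻¹ + (2) * s^4 * c^5 * S^2 * u^4 * t + (-2) * s^4 * c^5 * S^2 * u^5 * t * u⁻¹ + (-2) * s^4 * c^7 * u^4 * t) * hsC + ((2) * c * u^4 * t + (-2) * c * u^5 * t * u⁻¹ + c * S^2 * u^4 * t + (-1) * c * S^2 * u^5 * t * u⁻¹ + c * S^4 * u^4 * t + (-1) * c * S^4 * u^5 * t * u⁻¹ + (2) * c^3 * u^4 * t + (-2) * c^3 * u^5 * t * u⁻¹ + (3) * c^3 * S^2 * u^4 * t + (-3) * c^3 * S^2 * u^5 * t * u⁻¹ + (2) * c^5 * u^4 * t + (-2) * c^5 * u^5 * t * u⁻¹) * hcS + ((-2) * c * u^4 * t + c * S^2 * u^4 * t) * hui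
    case hD =>
      have h1 : S^2 ≤ 1 := by nlinarith [sq_nonneg c]
      nlinarith [mul_pos hu hu, sq_nonneg (u*c), sq_nonneg c, sq_nonneg S, hsC, hcS,
        sq_nonneg (u*c*c), sq_nonneg (u*c*S), sq_nonneg (u*S)]
    case hP =>
      nlinarith [mul_pos hu hu, sq_nonneg (u*c), hsC, hcS]
  · rintro ⟨R, hR⟩
    have e1 : (1 : ℝ) = R := by
      have := hR 1 0 one_pos
      rwa [exPsi_norm 1 0 one_pos] at this
    have e2 : (2 : ℝ) = R := by
      have := hR 2 0 two_pos
      rwa [exPsi_norm 2 0 two_pos] at this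
    norm_num [← e1] at e2
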